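/- Let a_1,...,a_m be linearly independent unit vectors in ℝ^m all lying on ∂cap(p,ρ) for some p ∈ S^{m-1} and ρ ∈ [0,π/2). Let π_p be the orthogonal projection of ℝ^m onto the hyperplane p^⊥. Then cap(p,ρ) is the smallest circular cap containing {a_1,...,a_m} if and only if 0 lies in the convex hull of {π_p a_1,...,π_p a_m}. -/

import Mathlib

open Real Set
open scoped RealInnerProductSpace

set_option maxHeartbeats 1000000 in
theorem stmt6 {m : ℕ} (hm : 0 < m)
    (a : Fin m → EuclideanSpace ℝ (Fin m)) (ha : ∀ i, ‖a i‖ = 1)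
    (hindep : LinearIndependent ℝ a)
    (p : EuclideanSpace ℝ (Fin m)) (hp : ‖p‖ = 1) (ρ : ℝ)
    (hρ0 : 0 ≤ ρ) (hρ : ρ < π / 2)
    (hbd : ∀ i, ⟪a i, p⟫ = Real.cos ρ) :
    ((ρ = ⨆ i, Real.arccos (⟪p, a i⟫) ∧
        ∀ q : EuclideanSpace ℝ (Fin m), ‖q‖ = 1 →
          ρ ≤ ⨆ i, Real.arccos (⟪q, a i⟫)) ↔
      (0 : EuclideanSpace ℝ (Fin m)) ∈ convexHull ℝ
        (Set.range fun i =>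
          ((Submodule.orthogonalProjectionOnto (ℝ ∙ p)ᗮ (a i) : (ℝ ∙ p)ᗮ) : EuclideanSpace ℝ (Fin m)))) := by
  have hne : Nonempty (Fin m) := ⟨⟨0, hm⟩⟩
  set P : Fin m → EuclideanSpace ℝ (Fin m) :=
    fun i => ((Submodule.orthogonalProjectionOnto (ℝ ∙ p)ᗮ (a i) : (ℝ ∙ p)ᗮ) : EuclideanSpace ℝ (Fin m))
    with hPdef
  have hρπ : ρ ≤ π := le_of_lt (lt_of_lt_of_le hρ (by linarith [Real.pi_pos]))
  have hcos : 0 < Real.cos ρ := Real.cos_pos_of_mem_Ioo ⟨by linarith [Real.pi_pos], hρ⟩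
  have hPeq : ∀ i, P i = a i - Real.cos ρ • p := by
    intro i
    rw [hPdef]
    simp only
    rw [Submodule.orthogonalProjectionOnto_orthogonal, Submodule.coe_mk,
      Submodule.starProjection_unit_singleton ℝ hp,
      real_inner_comm, hbd]
  have hPp : ∀ i, ⟪p, P i⟫ = 0 := by
    intro i
    exact ((Submodule.mem_orthogonal _ _).1 (Submodule.orthogonalProjectionOnto (ℝ ∙ p)ᗮ (a i)).2) p
      (Submodule.mem_span_singleton_self p)
  have hai : ∀ i, a i = Real.cos ρ • p + P i := by
    intro i; rw [hPeq i]; abel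
  have hpa : ∀ i, ⟪p, a i⟫ = Real.cos ρ := fun i => by rw [real_inner_comm]; exact hbd i
  have hsup_p : (⨆ i, Real.arccos ⟪p, a i⟫) = ρ := by
    have h : ∀ i : Fin m, Real.arccos ⟪p, a i⟫ = ρ := fun i => by
      rw [hpa i, Real.arccos_cos hρ0 hρπ]
    simp only [h]
    exact ciSup_const
  constructor
  · -- smallest cap → 0 ∈ hull
    rintro ⟨-, hmin⟩
    by_contra hmem
    obtain ⟨f, u, hfu, hub⟩ := geometric_hahn_banach_point_closed
      (convex_convexHull ℝ _)
      (((Set.finite_range P).isCompact_convexHull ℝ).isClosed) hmem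
    have hu0 : 0 < u := by simpa using hfu
    obtain ⟨v, hvx⟩ : ∃ v : EuclideanSpace ℝ (Fin m), ∀ x, ⟪v, x⟫ = f x :=
      ⟨(InnerProductSpace.toDual ℝ (EuclideanSpace ℝ (Fin m))).symm f,
        fun x => InnerProductSpace.toDual_symm_apply⟩
    obtain ⟨w, hw⟩ : ∃ w : EuclideanSpace ℝ (Fin m), w = v - ⟪p, v⟫ • p := ⟨_, rfl⟩
    have hpp : ⟪p, p⟫ = 1 := by
      rw [real_inner_self_eq_norm_mul_norm, hp]; ring
    have hwp' : ⟪p, w⟫ = 0 := by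
      rw [hw, inner_sub_right, real_inner_smul_right, hpp]; ring
    have hwP : ∀ i, u < ⟪w, P i⟫ := by
      intro i
      have h1 : ⟪w, P i⟫ = ⟪v, P i⟫ := by
        rw [hw, inner_sub_left, real_inner_smul_left, hPp i]; ring
      rw [h1, hvx]
      exact hub _ (subset_convexHull ℝ _ (mem_range_self i))
    have hw0 : w ≠ 0 := by
      intro h
      have := hwP ⟨0, hm⟩
      rw [h, inner_zero_left] at this
      linarith
    have hnw : 0 < ‖w‖ := norm_pos_iff.2 hw0
    obtain ⟨e, he⟩ : ∃ e : EuclideanSpace ℝ (Fin m), e = (‖w‖⁻¹ : ℝ) • w := ⟨_, rfl⟩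
    have hee : ‖e‖ = 1 := by rw [he]; exact norm_smul_inv_norm hw0
    have hep : ⟪p, e⟫ = 0 := by
      rw [he, real_inner_smul_right, hwp']; ring
    set δ : ℝ := u / ‖w‖ with hδ
    have hδ0 : 0 < δ := div_pos hu0 hnw
    have heai : ∀ i, δ < ⟪e, a i⟫ := by
      intro i
      have h0 : ⟪e, p⟫ = 0 := by rw [real_inner_comm]; exact hep
      have h1 : ⟪e, a i⟫ = ⟪e, P i⟫ := by
        rw [hai i, inner_add_right, real_inner_smul_right, h0]; ring
      have h3 : δ < ⟪e, P i⟫ := by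
        rw [he, real_inner_smul_left, hδ, div_eq_mul_inv, mul_comm]
        exact mul_lt_mul_of_pos_left (hwP i) (inv_pos.2 hnw)
      rw [h1]; exact h3
    set t : ℝ := δ / Real.cos ρ with ht
    have ht0 : 0 < t := div_pos hδ0 hcos
    have htδ : Real.cos ρ * t = δ := by
      rw [ht]; field_simp
    obtain ⟨c, hcv⟩ : ∃ c : EuclideanSpace ℝ (Fin m), c = p + t • e := ⟨_, rfl⟩
    have hc2 : ‖c‖ ^ 2 = 1 + t ^ 2 := by
      rw [hcv, norm_add_sq_real, hp, real_inner_smul_right, hep, norm_smul, hee]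
      rw [Real.norm_eq_abs, abs_of_pos ht0]
      ring
    have hcn0 : 0 < ‖c‖ := by nlinarith [norm_nonneg c]
    have hcne : c ≠ 0 := norm_pos_iff.1 hcn0
    obtain ⟨q, hqv⟩ : ∃ q : EuclideanSpace ℝ (Fin m), q = (‖c‖⁻¹ : ℝ) • c := ⟨_, rfl⟩
    have hq1 : ‖q‖ = 1 := by rw [hqv]; exact norm_smul_inv_norm hcne
    have hcle : ‖c‖ ≤ 1 + t ^ 2 / 2 := by nlinarith [norm_nonneg c]
    have hkey : ∀ i, Real.cos ρ < ⟪q, a i⟫ := by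
      intro i
      have h1 : ⟪c, a i⟫ = Real.cos ρ + t * ⟪e, a i⟫ := by
        rw [hcv, inner_add_left, real_inner_smul_left, hpa i]
      have h2 : Real.cos ρ * ‖c‖ < ⟪c, a i⟫ := by
        have h3 := heai i
        have h4 : Real.cos ρ * ‖c‖ ≤ Real.cos ρ + Real.cos ρ * (t ^ 2 / 2) := by
          nlinarith
        have h5 : Real.cos ρ * (t ^ 2 / 2) = δ * t / 2 := by
          nlinarith [htδ]
        rw [h1]
        nlinarith
      rw [hqv, real_inner_smul_left, inv_mul_eq_div, lt_div_iff₀ hcn0]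
      linarith [h2]
    have hlt : ∀ i, Real.arccos ⟪q, a i⟫ < ρ := by
      intro i
      have habs : |⟪q, a i⟫| ≤ 1 := by
        have := abs_real_inner_le_norm q (a i)
        rwa [hq1, ha i, one_mul] at this
      rw [abs_le] at habs
      have hmem1 : ⟪q, a i⟫ ∈ Set.Icc (-1 : ℝ) 1 := ⟨habs.1, habs.2⟩
      have hmem2 : Real.cos ρ ∈ Set.Icc (-1 : ℝ) 1 := ⟨Real.neg_one_le_cos ρ, Real.cos_le_one ρ⟩
      have := Real.strictAntiOn_arccos hmem2 hmem1 (hkey i)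
      rwa [Real.arccos_cos hρ0 hρπ] at this
    obtain ⟨i₀, hi₀⟩ := exists_eq_ciSup_of_finite (f := fun i => Real.arccos ⟪q, a i⟫)
    have hle := hmin q hq1
    rw [← hi₀] at hle
    exact absurd hle (not_le.2 (hlt i₀))
  · -- 0 ∈ hull → smallest cap
    intro hmem
    refine ⟨hsup_p.symm, ?_⟩
    intro q hq
    have key : ∃ i, ⟪q, a i⟫ ≤ Real.cos ρ := by
      by_contra hcon
      push_neg at hcon
      rw [convexHull_eq] at hmem
      obtain ⟨ι, t, wt, z, hw0, hw1, hz, hc⟩ := hmem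
      have hcm : ∑ j ∈ t, wt j • z j = 0 := by
        rw [Finset.centerMass, hw1, inv_one, one_smul] at hc
        exact hc
      have h1 : ∑ j ∈ t, wt j * ⟪q, z j⟫ = 0 := by
        calc ∑ j ∈ t, wt j * ⟪q, z j⟫ = ∑ j ∈ t, ⟪q, wt j • z j⟫ :=
              Finset.sum_congr rfl (fun j _ => (real_inner_smul_right q (z j) (wt j)).symm)
        _ = ⟪q, ∑ j ∈ t, wt j • z j⟫ := (inner_sum t (fun j => wt j • z j) q).symm
        _ = 0 := by rw [hcm, inner_zero_right]
      have hqp : ⟪q, p⟫ < 1 := by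
        rcases eq_or_ne q p with rfl | hne'
        · exact absurd (hcon ⟨0, hm⟩) (by rw [hpa]; exact lt_irrefl _)
        · have hle : ⟪q, p⟫ ≤ 1 := by
            have := real_inner_le_norm q p
            rwa [hq, hp, one_mul] at this
          exact lt_of_le_of_ne hle (fun h => hne' ((inner_eq_one_iff_of_norm_eq_one hq hp).1 h))
      set c : ℝ := Real.cos ρ * (1 - ⟪q, p⟫) with hcdef
      have hc0 : 0 < c := mul_pos hcos (by linarith)
      have hterm : ∀ j ∈ t, wt j * c ≤ wt j * ⟪q, z j⟫ := by
        intro j hj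
        obtain ⟨i, hi⟩ := hz j hj
        have : c < ⟪q, z j⟫ := by
          rw [← hi, hPeq i, inner_sub_right, real_inner_smul_right, hcdef]
          have := hcon i
          nlinarith
        exact mul_le_mul_of_nonneg_left this.le (hw0 j hj)
      have : c ≤ 0 := by
        have hsum : ∑ j ∈ t, wt j * c ≤ ∑ j ∈ t, wt j * ⟪q, z j⟫ :=
          Finset.sum_le_sum hterm
        rw [h1] at hsum
        calc c = (∑ j ∈ t, wt j) * c := by rw [hw1, one_mul]
        _ = ∑ j ∈ t, wt j * c := by rw [Finset.sum_mul]
        _ ≤ 0 := hsum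
      linarith
    obtain ⟨i, hi⟩ := key
    have harc : ρ ≤ Real.arccos ⟪q, a i⟫ := by
      rw [← Real.arccos_cos hρ0 hρπ]
      unfold Real.arccos
      have := Real.monotone_arcsin hi
      linarith
    exact le_trans harc (le_ciSup (f := fun i => Real.arccos ⟪q, a i⟫) (Set.Finite.bddAbove (Set.finite_range _)) i)
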